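/- Let X_1,…,X_n, A_2,…,A_n, B_2,…,B_n be elements of a commutative ring. Then det_{1≤i,j≤n} ( (X_i+A_n)(X_i+A_{n-1})···(X_i+A_{j+1}) · (X_i+B_j)(X_i+B_{j-1})···(X_i+B_2) ) = ∏_{1≤i<j≤n} (X_i−X_j) · ∏_{2≤i≤j≤n} (B_i−A_j). -/

import Mathlib

open Finset

namespace KrattAux

variable {R : Type*} [CommRing R]

/-- The matrix at stage `r` of the column reduction. -/
def M (n : ℕ) (X A B : ℕ → R) (r : ℕ) : Matrix (Fin n) (Fin n) R :=
  Matrix.of fun i j : Fin n =>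
    (∏ k ∈ Finset.Icc (j.1 + r + 2) n, (X (i.1 + 1) + A k)) *
    (∏ k ∈ Finset.Icc 2 (j.1 + 1), (X (i.1 + 1) + B k))

/-- Scalar factored out of column `b` at stage `r`. -/
def v (n : ℕ) (A B : ℕ → R) (r : ℕ) : Fin n → R :=
  fun b => if b.1 + r + 2 ≤ n then A (b.1 + r + 2) - B (b.1 + 2) else 1

/-- Unipotent lower-triangular matrix performing the column operations. -/
def V (n : ℕ) (r : ℕ) : Matrix (Fin n) (Fin n) R :=
  Matrix.of fun a b : Fin n =>
    if a.1 = b.1 then 1 else if a.1 = b.1 + 1 ∧ b.1 + r + 2 ≤ n then -1 else 0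

lemma V_diag (n r : ℕ) (b : Fin n) : (V n r : Matrix (Fin n) (Fin n) R) b b = 1 := by
  simp [V]

lemma V_succ (n r : ℕ) (a b : Fin n) (ha : a.1 = b.1 + 1) (hc : b.1 + r + 2 ≤ n) :
    (V n r : Matrix (Fin n) (Fin n) R) a b = -1 := by
  simp only [V, Matrix.of_apply]
  rw [if_neg (by omega), if_pos ⟨ha, hc⟩]

lemma V_zero (n r : ℕ) (a b : Fin n) (h1 : a.1 ≠ b.1) (h2 : a.1 ≠ b.1 + 1) :
    (V n r : Matrix (Fin n) (Fin n) R) a b = 0 := by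
  simp only [V, Matrix.of_apply]
  rw [if_neg h1, if_neg (by rintro ⟨h, -⟩; exact h2 h)]

lemma det_V (n r : ℕ) : (V n r : Matrix (Fin n) (Fin n) R).det = 1 := by
  have h : (V n r : Matrix (Fin n) (Fin n) R).BlockTriangular OrderDual.toDual := by
    intro a b hab
    have hab' : a.1 < b.1 := hab
    exact V_zero n r a b (by omega) (by omega)
  rw [Matrix.det_of_lowerTriangular _ h]
  simp [V_diag]

lemma step (n : ℕ) (X A B : ℕ → R) (r : ℕ) :
    (M n X A B r).det = (∏ b : Fin n, v n A B r b) * (M n X A B (r + 1)).det := by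
  have key : M n X A B r * V n r =
      Matrix.of fun i b => v n A B r b * M n X A B (r + 1) i b := by
    ext i b
    simp only [Matrix.mul_apply, Matrix.of_apply]
    by_cases hc : b.1 + r + 2 ≤ n
    · have hb1 : b.1 + 1 < n := by omega
      set b' : Fin n := ⟨b.1 + 1, hb1⟩ with hb'
      have hsum : ∀ a : Fin n, M n X A B r i a * V n r a b =
          (if a = b then M n X A B r i b else 0) +
          (if a = b' then -(M n X A B r i b') else 0) := by
        intro a
        by_cases h1 : a = b
        · subst h1
          rw [if_pos rfl, if_neg (by simp only [hb', Fin.ext_iff]; omega), V_diag]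
          rw [mul_one, add_zero]
        · by_cases h2 : a = b'
          · subst h2
            rw [if_neg h1, if_pos rfl, V_succ n r b' b (by rw [hb']) hc]
            ring
          · rw [if_neg h1, if_neg h2, V_zero n r a b
              (fun h => h1 (Fin.ext h)) (fun h => h2 (by rw [hb', Fin.ext_iff]; exact h)),
              mul_zero, add_zero]
      rw [Finset.sum_congr rfl fun a _ => hsum a, Finset.sum_add_distrib,
        Finset.sum_ite_eq' _ b, Finset.sum_ite_eq' _ b']
      simp only [mem_univ, if_pos]
      have hv : v n A B r b = A (b.1 + r + 2) - B (b.1 + 2) := by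
        simp only [v]; rw [if_pos hc]
      have e1 : M n X A B r i b =
          (X (i.1 + 1) + A (b.1 + r + 2)) *
            ((∏ k ∈ Finset.Icc (b.1 + r + 3) n, (X (i.1 + 1) + A k)) *
             (∏ k ∈ Finset.Icc 2 (b.1 + 1), (X (i.1 + 1) + B k))) := by
        simp only [M, Matrix.of_apply]
        have hsplit : Finset.Icc (b.1 + r + 2) n =
            insert (b.1 + r + 2) (Finset.Icc (b.1 + r + 3) n) := by
          have h1 : Finset.Icc (b.1 + r + 3) n = Finset.Ioc (b.1 + r + 2) n := by
            rw [← Finset.Icc_add_one_left_eq_Ioc]; rfl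
          rw [h1, Finset.Ioc_insert_left hc]
        rw [hsplit, Finset.prod_insert (by simp)]
        ring
      have e2 : M n X A B r i b' =
          (X (i.1 + 1) + B (b.1 + 2)) *
            ((∏ k ∈ Finset.Icc (b.1 + r + 3) n, (X (i.1 + 1) + A k)) *
             (∏ k ∈ Finset.Icc 2 (b.1 + 1), (X (i.1 + 1) + B k))) := by
        show (∏ k ∈ Finset.Icc (b.1 + 1 + r + 2) n, (X (i.1 + 1) + A k)) *
            (∏ k ∈ Finset.Icc 2 (b.1 + 1 + 1), (X (i.1 + 1) + B k)) = _
        have h1 : b.1 + 1 + r + 2 = b.1 + r + 3 := by omega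
        rw [h1, show b.1 + 1 + 1 = b.1 + 1 + 1 from rfl,
          Finset.prod_Icc_succ_top (show 2 ≤ b.1 + 1 + 1 by omega)]
        ring
      have e3 : M n X A B (r + 1) i b =
          (∏ k ∈ Finset.Icc (b.1 + r + 3) n, (X (i.1 + 1) + A k)) *
            (∏ k ∈ Finset.Icc 2 (b.1 + 1), (X (i.1 + 1) + B k)) := by
        show (∏ k ∈ Finset.Icc (b.1 + (r + 1) + 2) n, (X (i.1 + 1) + A k)) * _ = _
        rw [show b.1 + (r + 1) + 2 = b.1 + r + 3 by omega]
      rw [e1, e2, e3, hv]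
      ring
    · have hV : ∀ a : Fin n, (V n r : Matrix (Fin n) (Fin n) R) a b =
          if a = b then 1 else 0 := by
        intro a
        by_cases h1 : a = b
        · rw [if_pos h1, h1, V_diag]
        · rw [if_neg h1]
          simp only [V, Matrix.of_apply]
          rw [if_neg (fun h => h1 (Fin.ext h)), if_neg (by rintro ⟨-, h⟩; exact hc h)]
      simp only [hV, mul_ite, mul_one, mul_zero, Finset.sum_ite_eq' _ b, mem_univ, if_pos]
      have hv : v n A B r b = 1 := by simp only [v]; rw [if_neg hc]
      rw [hv, one_mul]
      simp only [M, Matrix.of_apply]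
      rw [Finset.Icc_eq_empty (a := b.1 + r + 2) (b := n) (by omega),
        Finset.Icc_eq_empty (a := b.1 + (r + 1) + 2) (b := n) (by omega)]
  calc (M n X A B r).det = (M n X A B r * V n r).det := by
        rw [Matrix.det_mul, det_V, mul_one]
    _ = _ := by rw [key, Matrix.det_mul_row]

lemma iterate (n : ℕ) (X A B : ℕ → R) (t : ℕ) :
    (M n X A B 0).det =
      (∏ s ∈ Finset.range t, ∏ b : Fin n, v n A B s b) * (M n X A B t).det := by
  induction t with
  | zero => simp
  | succ t ih => rw [ih, step, Finset.prod_range_succ]; ring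

lemma final (n : ℕ) (X A B : ℕ → R) [Nontrivial R] :
    (M n X A B n).det = ∏ i : Fin n, ∏ j ∈ Finset.Ioi i, (X (j.1 + 1) - X (i.1 + 1)) := by
  have hM : M n X A B n = Matrix.of fun i j : Fin n =>
      ((∏ k ∈ Finset.Icc 2 (j.1 + 1), (Polynomial.X + Polynomial.C (B k))).eval
        (X (i.1 + 1))) := by
    ext i j
    simp only [M, Matrix.of_apply, Polynomial.eval_prod, Polynomial.eval_add,
      Polynomial.eval_X, Polynomial.eval_C]
    rw [Finset.Icc_eq_empty (a := j.1 + n + 2) (b := n) (by omega),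
      Finset.prod_empty, one_mul]
  have hdeg : ∀ j : Fin n,
      (∏ k ∈ Finset.Icc 2 (j.1 + 1), (Polynomial.X + Polynomial.C (B k))).natDegree = j.1 := by
    intro j
    rw [Polynomial.natDegree_prod_of_monic _ _ (fun k _ => Polynomial.monic_X_add_C _)]
    simp [Polynomial.natDegree_X_add_C, Nat.card_Icc]
  have hmonic : ∀ j : Fin n,
      (∏ k ∈ Finset.Icc 2 (j.1 + 1), (Polynomial.X + Polynomial.C (B k))).Monic :=
    fun j => Polynomial.monic_prod_of_monic _ _ (fun k _ => Polynomial.monic_X_add_C _)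
  rw [hM, ← Matrix.det_eval_matrixOfPolynomials_eq_det_vandermonde
      (fun i : Fin n => X (i.1 + 1))
      (fun j : Fin n => ∏ k ∈ Finset.Icc 2 (j.1 + 1), (Polynomial.X + Polynomial.C (B k)))
      hdeg hmonic,
    Matrix.det_vandermonde]

lemma prod_v (n : ℕ) (A B : ℕ → R) (s : ℕ) :
    ∏ b : Fin n, v n A B s b =
      (-1 : R) ^ (n - s - 1) * ∏ c ∈ Finset.range (n - s - 1), (B (c + 2) - A (c + s + 2)) := by
  have h1 : ∏ b : Fin n, v n A B s b =
      ∏ c ∈ Finset.range n, (if c + s + 2 ≤ n then A (c + s + 2) - B (c + 2) else 1) := by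
    rw [← Fin.prod_univ_eq_prod_range (fun c => if c + s + 2 ≤ n then A (c + s + 2) - B (c + 2) else 1) n]
    rfl
  rw [h1]
  have h2 : ∏ c ∈ Finset.range n, (if c + s + 2 ≤ n then A (c + s + 2) - B (c + 2) else 1) =
      ∏ c ∈ Finset.range (n - s - 1), (if c + s + 2 ≤ n then A (c + s + 2) - B (c + 2) else 1) :=
    (Finset.prod_subset (by intro c hc; simp only [Finset.mem_range] at *; omega)
      (fun c hc hnc => if_neg (by simp only [Finset.mem_range] at *; omega))).symm
  rw [h2, Finset.prod_congr rfl (fun c hc => if_pos (by simp only [Finset.mem_range] at hc; omega)),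
    Finset.prod_congr rfl (fun c (hc : c ∈ Finset.range (n - s - 1)) =>
      show A (c + s + 2) - B (c + 2) = (-1) * (B (c + 2) - A (c + s + 2)) by ring),
    Finset.prod_mul_distrib, Finset.prod_const, Finset.card_range]

lemma reindexG (n : ℕ) (A B : ℕ → R) :
    ∏ s ∈ Finset.range n, ∏ c ∈ Finset.range (n - s - 1), (B (c + 2) - A (c + s + 2)) =
      ∏ i ∈ Finset.Icc 2 n, ∏ j ∈ Finset.Icc i n, (B i - A j) := by
  rw [Finset.prod_sigma', Finset.prod_sigma']
  refine Finset.prod_nbij' (fun p => ⟨p.2 + 2, p.2 + p.1 + 2⟩) (fun q => ⟨q.2 - q.1, q.1 - 2⟩)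
    ?_ ?_ ?_ ?_ ?_
  · rintro ⟨s, c⟩ hp
    simp only [Finset.mem_sigma, Finset.mem_range, Finset.mem_Icc] at *
    omega
  · rintro ⟨i, j⟩ hq
    simp only [Finset.mem_sigma, Finset.mem_range, Finset.mem_Icc] at *
    omega
  · rintro ⟨s, c⟩ hp
    simp only [Finset.mem_sigma, Finset.mem_range, Finset.mem_Icc] at hp
    simp only [Sigma.mk.inj_iff, heq_eq_eq]
    constructor <;> omega
  · rintro ⟨i, j⟩ hq
    simp only [Finset.mem_sigma, Finset.mem_range, Finset.mem_Icc] at hq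
    simp only [Sigma.mk.inj_iff, heq_eq_eq]
    constructor <;> omega
  · rintro ⟨s, c⟩ hp
    rfl

lemma reindexH (n : ℕ) (X : ℕ → R) :
    ∏ i : Fin n, ∏ j ∈ Finset.Ioi i, (X (i.1 + 1) - X (j.1 + 1)) =
      ∏ i ∈ Finset.Icc 1 n, ∏ j ∈ Finset.Icc (i + 1) n, (X i - X j) := by
  rw [Finset.prod_sigma', Finset.prod_sigma']
  refine Finset.prod_bij' (fun p _ => (⟨p.1.1 + 1, p.2.1 + 1⟩ : Σ _ : ℕ, ℕ))
    (fun q hq => ⟨⟨q.1 - 1, ?_⟩, ⟨q.2 - 1, ?_⟩⟩) ?_ ?_ ?_ ?_ ?_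
  · simp only [Finset.mem_sigma, Finset.mem_Icc] at hq
    omega
  · simp only [Finset.mem_sigma, Finset.mem_Icc] at hq
    omega
  · rintro ⟨i, j⟩ hp
    simp only [Finset.mem_sigma, Finset.mem_univ, Finset.mem_Ioi, Fin.lt_iff_val_lt_val] at hp
    simp only [Finset.mem_sigma, Finset.mem_Icc]
    omega
  · rintro ⟨i, j⟩ hq
    simp only [Finset.mem_sigma, Finset.mem_Icc] at hq
    simp only [Finset.mem_sigma, Finset.mem_univ, Finset.mem_Ioi, true_and, Fin.mk_lt_mk]
    omega
  · rintro ⟨i, j⟩ hp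
    simp only [Sigma.mk.inj_iff, heq_eq_eq, Fin.ext_iff]
    constructor <;> omega
  · rintro ⟨i, j⟩ hq
    simp only [Finset.mem_sigma, Finset.mem_Icc] at hq
    simp only [Sigma.mk.inj_iff, heq_eq_eq]
    constructor <;> omega
  · rintro ⟨i, j⟩ hp
    rfl

end KrattAux

/-- Krattenthaler's determinant lemma:
`det_{1≤i,j≤n} ( (X_i+A_n)⋯(X_i+A_{j+1}) · (X_i+B_j)⋯(X_i+B_2) )
 = ∏_{1≤i<j≤n} (X_i−X_j) · ∏_{2≤i≤j≤n} (B_i−A_j)`. -/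
theorem krattenthaler_det_lemma {R : Type*} [CommRing R] (n : ℕ)
    (X A B : ℕ → R) :
    Matrix.det (Matrix.of fun i j : Fin n =>
      (∏ k ∈ Finset.Icc (j.1 + 2) n, (X (i.1 + 1) + A k)) *
      (∏ k ∈ Finset.Icc 2 (j.1 + 1), (X (i.1 + 1) + B k))) =
    (∏ i ∈ Finset.Icc 1 n, ∏ j ∈ Finset.Icc (i + 1) n, (X i - X j)) *
    (∏ i ∈ Finset.Icc 2 n, ∏ j ∈ Finset.Icc i n, (B i - A j)) := by
  nontriviality R
  have h0 : (Matrix.of fun i j : Fin n =>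
      (∏ k ∈ Finset.Icc (j.1 + 2) n, (X (i.1 + 1) + A k)) *
      (∏ k ∈ Finset.Icc 2 (j.1 + 1), (X (i.1 + 1) + B k))) = KrattAux.M n X A B 0 := rfl
  rw [h0, KrattAux.iterate n X A B n, KrattAux.final n X A B]
  set e : ℕ := ∑ s ∈ Finset.range n, (n - s - 1) with he_def
  have hG : ∏ s ∈ Finset.range n, ∏ b : Fin n, KrattAux.v n A B s b =
      (-1 : R) ^ e *
        ∏ s ∈ Finset.range n, ∏ c ∈ Finset.range (n - s - 1), (B (c + 2) - A (c + s + 2)) := by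
    rw [Finset.prod_congr rfl (fun s _ => KrattAux.prod_v n A B s),
      Finset.prod_mul_distrib, Finset.prod_pow_eq_pow_sum]
  have hV : ∏ i : Fin n, ∏ j ∈ Finset.Ioi i, (X (j.1 + 1) - X (i.1 + 1)) =
      (-1 : R) ^ e * ∏ i : Fin n, ∏ j ∈ Finset.Ioi i, (X (i.1 + 1) - X (j.1 + 1)) := by
    have h1 : ∀ i : Fin n, ∏ j ∈ Finset.Ioi i, (X (j.1 + 1) - X (i.1 + 1)) =
        (-1 : R) ^ (n - i.1 - 1) * ∏ j ∈ Finset.Ioi i, (X (i.1 + 1) - X (j.1 + 1)) := by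
      intro i
      rw [Finset.prod_congr rfl (fun j (_ : j ∈ Finset.Ioi i) =>
          show X (j.1 + 1) - X (i.1 + 1) = (-1) * (X (i.1 + 1) - X (j.1 + 1)) by ring),
        Finset.prod_mul_distrib, Finset.prod_const, Fin.card_Ioi,
        show n - 1 - i.1 = n - i.1 - 1 by omega]
    rw [Finset.prod_congr rfl (fun i _ => h1 i), Finset.prod_mul_distrib,
      Finset.prod_pow_eq_pow_sum]
    congr 1
    rw [he_def, ← Fin.sum_univ_eq_sum_range (fun s => n - s - 1) n]
  rw [hG, hV]
  have hee : ((-1 : R) ^ e) * ((-1 : R) ^ e) = 1 := by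
    rw [← pow_add]
    exact Even.neg_one_pow ⟨e, rfl⟩
  calc ((-1 : R) ^ e *
        ∏ s ∈ Finset.range n, ∏ c ∈ Finset.range (n - s - 1), (B (c + 2) - A (c + s + 2))) *
      ((-1 : R) ^ e * ∏ i : Fin n, ∏ j ∈ Finset.Ioi i, (X (i.1 + 1) - X (j.1 + 1)))
      = (((-1 : R) ^ e) * ((-1 : R) ^ e)) *
        ((∏ s ∈ Finset.range n, ∏ c ∈ Finset.range (n - s - 1), (B (c + 2) - A (c + s + 2))) *
         ∏ i : Fin n, ∏ j ∈ Finset.Ioi i, (X (i.1 + 1) - X (j.1 + 1))) := by ring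
    _ = _ := by
        rw [hee, one_mul, KrattAux.reindexG n A B, KrattAux.reindexH n X, mul_comm]
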